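/- For any measurable function ψ : 𝒳 × 𝒞 → ℝ, any measurable function a : 𝒳 × 𝒞^N → (0, ∞), and any fixed index i ∈ {1, …, N}, provided all expectations below are finite, I(X;C) ≥ 1 + E_{P_i}[ ψ(X, C_i) − log a(X, C_1, …, C_N) ] − E_Q[ e^{ψ(X, C_i)} / a(X, C_1, …, C_N) ]. -/

import Mathlib

open MeasureTheory ProbabilityTheory Filter
open scoped Classical ENNReal Topology

/-- The Kullback–Leibler divergence `KL(P‖Q) = ∫ log (dP/dQ) dP`, with value `+∞`
when `P` is not absolutely continuous with respect to `Q` (or the integral is undefined). -/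
noncomputable def klDivergence {Ω : Type*} [MeasurableSpace Ω] (P Q : Measure Ω) : EReal :=
  if P ≪ Q ∧ Integrable (fun ω => Real.log ((P.rnDeriv Q ω).toReal)) P
  then ((∫ ω, Real.log ((P.rnDeriv Q ω).toReal) ∂P : ℝ) : EReal)
  else ⊤

/-- The mutual information `I(X;C) := KL(law(X,C) ‖ law(X) ⊗ law(C))`. -/
noncomputable def mutualInfo {Ω 𝓧 𝒞 : Type*} [MeasurableSpace Ω] [MeasurableSpace 𝓧]
    [MeasurableSpace 𝒞] (μ : Measure Ω) (X : Ω → 𝓧) (C : Ω → 𝒞) : EReal :=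
  klDivergence (μ.map (fun ω => (X ω, C ω))) ((μ.map X).prod (μ.map C))

/-- The conditional law of `X` given `C = c`. -/
noncomputable def condLaw {Ω 𝓧 𝒞 : Type*} [MeasurableSpace Ω] [MeasurableSpace 𝓧]
    [MeasurableSpace 𝒞] (μ : Measure Ω) (X : Ω → 𝓧) (C : Ω → 𝒞) (c : 𝒞) : Measure 𝓧 :=
  (μ[|C ⁻¹' {c}]).map X

/-- The law `P_i` of `(X, (C_1, …, C_N))` under which `C_1, …, C_N` are i.i.d. copies of `C`
and `X` is drawn from the conditional law of `X` given `C = C_i`, conditionally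
independently of the other `C_j`. -/
noncomputable def Pmeas {Ω 𝓧 𝒞 : Type*} [MeasurableSpace Ω] [MeasurableSpace 𝓧]
    [MeasurableSpace 𝒞] (μ : Measure Ω) (X : Ω → 𝓧) (C : Ω → 𝒞) (N : ℕ) (i : Fin N) :
    Measure (𝓧 × (Fin N → 𝒞)) :=
  (Measure.pi fun _ : Fin N => μ.map C).bind
    (fun cs => (condLaw μ X C (cs i)).map (fun x => (x, cs)))

/-- The law `Q` of `(X, (C_1, …, C_N))` under which `X` has the marginal law of `X` and is
independent of `C_1, …, C_N`, which are i.i.d. copies of `C`. -/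
noncomputable def Qmeas {Ω 𝓧 𝒞 : Type*} [MeasurableSpace Ω] [MeasurableSpace 𝓧]
    [MeasurableSpace 𝒞] (μ : Measure Ω) (X : Ω → 𝓧) (C : Ω → 𝒞) (N : ℕ) :
    Measure (𝓧 × (Fin N → 𝒞)) :=
  (μ.map X).prod (Measure.pi fun _ : Fin N => μ.map C)

theorem test : True := trivial


set_option linter.unusedSectionVars false


section AuxLemmas
lemma pi_map_eval {M N : ℕ} (κ : Measure (Fin M)) [IsProbabilityMeasure κ] (i : Fin N) :
    (Measure.pi fun _ : Fin N => κ).map (Function.eval i) = κ := by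
  ext s hs
  rw [Measure.map_apply (measurable_pi_apply i) hs, Set.eval_preimage, Measure.pi_pi]
  rw [Fintype.prod_eq_single i (fun j hj => by simp [Function.update_of_ne hj])]
  simp

section

variable {Ω 𝓧 : Type*} [MeasurableSpace Ω] [MeasurableSpace 𝓧] {M : ℕ}
  (μ : Measure Ω) [IsProbabilityMeasure μ]
  (X : Ω → 𝓧) (C : Ω → Fin M)

lemma condLaw_apply (hX : Measurable X) (hC : Measurable C) (c : Fin M) {s : Set 𝓧} (hs : MeasurableSet s) :
    condLaw μ X C c s = (μ (C ⁻¹' {c}))⁻¹ * μ (C ⁻¹' {c} ∩ X ⁻¹' s) := by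
  rw [condLaw, Measure.map_apply hX hs, cond_apply (hC (measurableSet_singleton c))]

lemma condLaw_isProb (hX : Measurable X) (hpos : ∀ c : Fin M, 0 < μ (C ⁻¹' {c})) (c : Fin M) : IsProbabilityMeasure (condLaw μ X C c) := by
  haveI : IsProbabilityMeasure (μ[|C ⁻¹' {c}]) :=
    cond_isProbabilityMeasure (hpos c).ne'
  exact Measure.isProbabilityMeasure_map hX.aemeasurable

lemma condLaw_ac (hX : Measurable X) (hC : Measurable C) (c : Fin M) : condLaw μ X C c ≪ μ.map X := by
  refine Measure.AbsolutelyContinuous.mk fun s hs h0 => ?_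
  rw [Measure.map_apply hX hs] at h0
  rw [condLaw_apply μ X C hX hC c hs]
  rw [measure_mono_null (Set.inter_subset_right) h0, mul_zero]

lemma nu_apply (hX : Measurable X) (hC : Measurable C) (hpos : ∀ c : Fin M, 0 < μ (C ⁻¹' {c})) {s : Set (𝓧 × Fin M)} (hs : MeasurableSet s) :
    μ.map (fun ω => (X ω, C ω)) s
      = ∑ c : Fin M, μ (C ⁻¹' {c}) * condLaw μ X C c ((fun x => (x, c)) ⁻¹' s) := by
  rw [Measure.map_apply (hX.prodMk hC) hs]
  have hdecomp : (fun ω => (X ω, C ω)) ⁻¹' s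
      = ⋃ c ∈ Finset.univ, (C ⁻¹' {c} ∩ X ⁻¹' ((fun x => (x, c)) ⁻¹' s)) := by
    ext ω
    simp only [Set.mem_preimage, Finset.mem_univ, Set.iUnion_true, Set.mem_iUnion,
      Set.mem_inter_iff, Set.mem_singleton_iff]
    exact ⟨fun h => ⟨C ω, rfl, h⟩, fun ⟨c, hc, h⟩ => by rwa [← hc] at h⟩
  rw [hdecomp, measure_biUnion_finset]
  · refine Finset.sum_congr rfl fun c _ => ?_
    rw [condLaw_apply μ X C hX hC c (measurable_prodMk_right hs)]
    rw [← mul_assoc, ENNReal.mul_inv_cancel (hpos c).ne' (measure_ne_top μ _), one_mul]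
  · intro c _ c' _ hcc'
    apply Set.disjoint_left.mpr
    rintro ω ⟨h1, -⟩ ⟨h2, -⟩
    exact hcc' (h1.symm.trans h2)
  · intro c _
    exact (hC (measurableSet_singleton c)).inter (hX (measurable_prodMk_right hs))

end

section
variable {Ω 𝓧 : Type*} [MeasurableSpace Ω] [MeasurableSpace 𝓧] {M : ℕ}
  (μ : Measure Ω) [IsProbabilityMeasure μ] (X : Ω → 𝓧) (C : Ω → Fin M)

lemma nu_eq_withDensity (hX : Measurable X) (hC : Measurable C)
    (hpos : ∀ c : Fin M, 0 < μ (C ⁻¹' {c})) :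
    μ.map (fun ω => (X ω, C ω))
      = ((μ.map X).prod (μ.map C)).withDensity
          (fun p => (condLaw μ X C p.2).rnDeriv (μ.map X) p.1) := by
  haveI : IsProbabilityMeasure (μ.map X) := Measure.isProbabilityMeasure_map hX.aemeasurable
  haveI : IsProbabilityMeasure (μ.map C) := Measure.isProbabilityMeasure_map hC.aemeasurable
  haveI : ∀ c, IsProbabilityMeasure (condLaw μ X C c) := condLaw_isProb μ X C hX hpos
  have hG : Measurable (fun p : 𝓧 × Fin M => (condLaw μ X C p.2).rnDeriv (μ.map X) p.1) :=
    measurable_from_prod_countable_left fun c => Measure.measurable_rnDeriv (condLaw μ X C c) (μ.map X)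
  ext s hs
  rw [withDensity_apply _ hs, ← lintegral_indicator hs _,
    lintegral_prod_symm' _ (hG.indicator hs), lintegral_fintype,
    nu_apply μ X C hX hC hpos hs]
  refine Finset.sum_congr rfl fun c _ => ?_
  have hsec : MeasurableSet ((fun x => (x, c)) ⁻¹' s) := measurable_prodMk_right hs
  have hind : ∀ x, s.indicator
        (fun p : 𝓧 × Fin M => (condLaw μ X C p.2).rnDeriv (μ.map X) p.1) (x, c)
      = ((fun x => (x, c)) ⁻¹' s).indicator ((condLaw μ X C c).rnDeriv (μ.map X)) x := by
    intro x; by_cases h : (x, c) ∈ s <;> simp [Set.indicator, h]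
  simp_rw [hind]
  rw [lintegral_indicator hsec _, ← withDensity_apply _ hsec,
    Measure.withDensity_rnDeriv_eq _ _ (condLaw_ac μ X C hX hC c),
    Measure.map_apply hC (measurableSet_singleton c)]
  exact mul_comm _ _

lemma P_eq_withDensity (hX : Measurable X) (hC : Measurable C)
    (hpos : ∀ c : Fin M, 0 < μ (C ⁻¹' {c})) (N : ℕ) (i : Fin N) :
    Pmeas μ X C N i = (Qmeas μ X C N).withDensity
      (fun p => (condLaw μ X C (p.2 i)).rnDeriv (μ.map X) p.1) := by
  haveI : IsProbabilityMeasure (μ.map X) := Measure.isProbabilityMeasure_map hX.aemeasurable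
  haveI : IsProbabilityMeasure (μ.map C) := Measure.isProbabilityMeasure_map hC.aemeasurable
  haveI : ∀ c, IsProbabilityMeasure (condLaw μ X C c) := condLaw_isProb μ X C hX hpos
  have hGN : Measurable (fun p : 𝓧 × (Fin N → Fin M) =>
      (condLaw μ X C (p.2 i)).rnDeriv (μ.map X) p.1) :=
    measurable_from_prod_countable_left fun cs => Measure.measurable_rnDeriv (condLaw μ X C (cs i)) (μ.map X)
  have hker : Measurable (fun cs : Fin N → Fin M =>
      (condLaw μ X C (cs i)).map (fun x => (x, cs))) := measurable_of_countable _
  ext s hs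
  rw [Pmeas, Qmeas, Measure.bind_apply hs hker.aemeasurable, withDensity_apply _ hs,
    ← lintegral_indicator hs _, lintegral_prod_symm' _ (hGN.indicator hs)]
  refine lintegral_congr fun cs => ?_
  rw [Measure.map_apply measurable_prodMk_right hs]
  have hsec : MeasurableSet ((fun x => (x, cs)) ⁻¹' s) := measurable_prodMk_right hs
  have hind : ∀ x, s.indicator (fun p : 𝓧 × (Fin N → Fin M) =>
        (condLaw μ X C (p.2 i)).rnDeriv (μ.map X) p.1) (x, cs)
      = ((fun x => (x, cs)) ⁻¹' s).indicator ((condLaw μ X C (cs i)).rnDeriv (μ.map X)) x := by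
    intro x; by_cases h : (x, cs) ∈ s <;> simp [Set.indicator, h]
  simp_rw [hind]
  rw [lintegral_indicator hsec _, ← withDensity_apply _ hsec,
    Measure.withDensity_rnDeriv_eq _ _ (condLaw_ac μ X C hX hC (cs i))]

lemma Pmap_eq (hX : Measurable X) (hC : Measurable C)
    (hpos : ∀ c : Fin M, 0 < μ (C ⁻¹' {c})) (N : ℕ) (i : Fin N) :
    (Pmeas μ X C N i).map (fun p => (p.1, p.2 i)) = μ.map (fun ω => (X ω, C ω)) := by
  haveI : IsProbabilityMeasure (μ.map X) := Measure.isProbabilityMeasure_map hX.aemeasurable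
  haveI : IsProbabilityMeasure (μ.map C) := Measure.isProbabilityMeasure_map hC.aemeasurable
  haveI : ∀ c, IsProbabilityMeasure (condLaw μ X C c) := condLaw_isProb μ X C hX hpos
  have hGN : Measurable (fun p : 𝓧 × (Fin N → Fin M) =>
      (condLaw μ X C (p.2 i)).rnDeriv (μ.map X) p.1) :=
    measurable_from_prod_countable_left fun cs => Measure.measurable_rnDeriv (condLaw μ X C (cs i)) (μ.map X)
  have hT : Measurable (fun p : 𝓧 × (Fin N → Fin M) => (p.1, p.2 i)) :=
    measurable_fst.prodMk ((measurable_pi_apply i).comp measurable_snd)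
  ext s hs
  set F : Fin M → ℝ≥0∞ := fun c => condLaw μ X C c ((fun x => (x, c)) ⁻¹' s) with hF
  rw [Measure.map_apply hT hs, P_eq_withDensity μ X C hX hC hpos N i,
    withDensity_apply _ (hT hs), ← lintegral_indicator (hT hs) _, Qmeas,
    lintegral_prod_symm' _ (hGN.indicator (hT hs))]
  have key : ∀ cs : Fin N → Fin M,
      (∫⁻ x, ((fun p : 𝓧 × (Fin N → Fin M) => (p.1, p.2 i)) ⁻¹' s).indicator
        (fun p => (condLaw μ X C (p.2 i)).rnDeriv (μ.map X) p.1) (x, cs) ∂(μ.map X))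
        = F (cs i) := by
    intro cs
    have hsec : MeasurableSet ((fun x => (x, cs i)) ⁻¹' s) := measurable_prodMk_right hs
    have hind : ∀ x, ((fun p : 𝓧 × (Fin N → Fin M) => (p.1, p.2 i)) ⁻¹' s).indicator
          (fun p => (condLaw μ X C (p.2 i)).rnDeriv (μ.map X) p.1) (x, cs)
        = ((fun x => (x, cs i)) ⁻¹' s).indicator ((condLaw μ X C (cs i)).rnDeriv (μ.map X)) x := by
      intro x; by_cases h : (x, cs i) ∈ s <;> simp [Set.indicator, h]
    simp_rw [hind]
    rw [lintegral_indicator hsec _, ← withDensity_apply _ hsec,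
      Measure.withDensity_rnDeriv_eq _ _ (condLaw_ac μ X C hX hC (cs i))]
  simp_rw [key]
  have hmarg : ∫⁻ cs, F (cs i) ∂(Measure.pi fun _ : Fin N => μ.map C)
      = ∫⁻ c, F c ∂(μ.map C) := by
    conv_rhs => rw [← pi_map_eval (μ.map C) i]
    rw [lintegral_map (measurable_of_countable F) (measurable_pi_apply i)]
  rw [hmarg, lintegral_fintype, nu_apply μ X C hX hC hpos hs]
  refine (Finset.sum_congr rfl fun c _ => ?_).symm
  rw [Measure.map_apply hC (measurableSet_singleton c)]
  exact mul_comm _ _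

lemma P_univ (hX : Measurable X) (hC : Measurable C)
    (hpos : ∀ c : Fin M, 0 < μ (C ⁻¹' {c})) (N : ℕ) (i : Fin N) :
    Pmeas μ X C N i Set.univ = 1 := by
  haveI : IsProbabilityMeasure (μ.map C) := Measure.isProbabilityMeasure_map hC.aemeasurable
  haveI : ∀ c, IsProbabilityMeasure (condLaw μ X C c) := condLaw_isProb μ X C hX hpos
  have hker : Measurable (fun cs : Fin N → Fin M =>
      (condLaw μ X C (cs i)).map (fun x => (x, cs))) := measurable_of_countable _
  rw [Pmeas, Measure.bind_apply MeasurableSet.univ hker.aemeasurable]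
  have : ∀ cs : Fin N → Fin M,
      ((condLaw μ X C (cs i)).map (fun x => (x, cs))) Set.univ = 1 := by
    intro cs
    rw [Measure.map_apply measurable_prodMk_right MeasurableSet.univ]
    simp
  simp_rw [this]
  simp

end


/-- multi-sample NWJ lower bound, eq. (17) of the paper:
for any measurable `ψ : 𝒳 × 𝒞 → ℝ`, any measurable positive `a : 𝒳 × 𝒞^N → (0,∞)`
and any fixed `i ∈ {1,…,N}`, provided all expectations are finite,
`I(X;C) ≥ 1 + E_{P_i}[ψ(X,C_i) − log a(X,C₁,…,C_N)] − E_Q[e^{ψ(X,C_i)} / a(X,C₁,…,C_N)]`. -/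
theorem stmt_1 {Ω 𝓧 : Type*} [MeasurableSpace Ω] [MeasurableSpace 𝓧]
    {M : ℕ} (μ : Measure Ω) [IsProbabilityMeasure μ]
    (X : Ω → 𝓧) (C : Ω → Fin M) (hX : Measurable X) (hC : Measurable C)
    (hpos : ∀ c : Fin M, 0 < μ (C ⁻¹' {c}))
    (N : ℕ) (hN : 1 ≤ N) (i : Fin N)
    (ψ : 𝓧 → Fin M → ℝ) (hψ : Measurable (fun p : 𝓧 × Fin M => ψ p.1 p.2))
    (a : 𝓧 → (Fin N → Fin M) → ℝ)
    (ha : Measurable (fun p : 𝓧 × (Fin N → Fin M) => a p.1 p.2))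
    (hapos : ∀ x cs, 0 < a x cs)
    (hintP : Integrable (fun p : 𝓧 × (Fin N → Fin M) =>
      ψ p.1 (p.2 i) - Real.log (a p.1 p.2)) (Pmeas μ X C N i))
    (hintQ : Integrable (fun p : 𝓧 × (Fin N → Fin M) =>
      Real.exp (ψ p.1 (p.2 i)) / a p.1 p.2) (Qmeas μ X C N)) :
    ((1 + (∫ p, (ψ p.1 (p.2 i) - Real.log (a p.1 p.2)) ∂(Pmeas μ X C N i))
        - ∫ p, Real.exp (ψ p.1 (p.2 i)) / a p.1 p.2 ∂(Qmeas μ X C N) : ℝ) : EReal)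
      ≤ mutualInfo μ X C := by
  haveI : IsProbabilityMeasure (μ.map X) := Measure.isProbabilityMeasure_map hX.aemeasurable
  haveI : IsProbabilityMeasure (μ.map C) := Measure.isProbabilityMeasure_map hC.aemeasurable
  haveI : ∀ c, IsProbabilityMeasure (condLaw μ X C c) := condLaw_isProb μ X C hX hpos
  simp only [mutualInfo, klDivergence]
  set ν := μ.map (fun ω => (X ω, C ω)) with hνdef
  set π := (μ.map X).prod (μ.map C) with hπdef
  split_ifs with h
  swap
  · exact le_top
  obtain ⟨hac, hint⟩ := h
  rw [EReal.coe_le_coe_iff]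
  set ρ := μ.map X with hρdef
  set P := Pmeas μ X C N i with hPdef
  set Q := Qmeas μ X C N with hQdef
  set G2 : 𝓧 × Fin M → ℝ≥0∞ := fun p => (condLaw μ X C p.2).rnDeriv ρ p.1 with hG2def
  have hG2 : Measurable G2 := measurable_from_prod_countable_left fun c =>
    Measure.measurable_rnDeriv (condLaw μ X C c) ρ
  have hνd : ν = π.withDensity G2 := nu_eq_withDensity μ X C hX hC hpos
  set GN : 𝓧 × (Fin N → Fin M) → ℝ≥0∞ :=
    fun p => (condLaw μ X C (p.2 i)).rnDeriv ρ p.1 with hGNdef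
  have hGN : Measurable GN := measurable_from_prod_countable_left fun cs =>
    Measure.measurable_rnDeriv (condLaw μ X C (cs i)) ρ
  have hPd : P = Q.withDensity GN := P_eq_withDensity μ X C hX hC hpos N i
  have hT : Measurable (fun p : 𝓧 × (Fin N → Fin M) => (p.1, p.2 i)) :=
    measurable_fst.prodMk ((measurable_pi_apply i).comp measurable_snd)
  have hmap : P.map (fun p => (p.1, p.2 i)) = ν := Pmap_eq μ X C hX hC hpos N i
  have hPQ : P ≪ Q := hPd ▸ withDensity_absolutelyContinuous _ _
  set L : 𝓧 × Fin M → ℝ := fun p => Real.log (G2 p).toReal with hLdef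
  have hLmeas : Measurable L := Real.measurable_log.comp hG2.ennreal_toReal
  have hrn_ae : ν.rnDeriv π =ᵐ[π] G2 := by
    rw [hνd]; exact Measure.rnDeriv_withDensity π hG2
  have hrn_aeν : ν.rnDeriv π =ᵐ[ν] G2 := hrn_ae.filter_mono hac.ae_le
  have hKeq : ∫ p, Real.log ((ν.rnDeriv π p).toReal) ∂ν = ∫ p, L p ∂ν :=
    integral_congr_ae (hrn_aeν.mono fun p hp => by rw [hLdef]; simp [hp])
  have hintLν : Integrable (fun p => L p) ν :=
    hint.congr (hrn_aeν.mono fun p hp => by rw [hLdef]; simp [hp])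
  set LT : 𝓧 × (Fin N → Fin M) → ℝ := fun q => L (q.1, q.2 i) with hLTdef
  have hLTmeas : Measurable LT := hLmeas.comp hT
  have hintLT : Integrable LT P := by
    rw [← hmap] at hintLν
    exact (integrable_map_measure hLmeas.aestronglyMeasurable hT.aemeasurable).mp hintLν
  have hLTint_eq : ∫ q, LT q ∂P = ∫ p, L p ∂ν := by
    rw [← hmap, integral_map hT.aemeasurable hLmeas.aestronglyMeasurable]
  -- almost-everywhere positivity / finiteness of the density
  have hfinQ : ∀ᵐ p ∂Q, GN p ≠ ∞ := by
    set Ebad : Set 𝓧 := ⋃ c, {x | (condLaw μ X C c).rnDeriv ρ x = ∞} with hE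
    have hEnull : ρ Ebad = 0 := by
      rw [hE, measure_iUnion_null_iff]
      intro c
      have h := Measure.rnDeriv_lt_top (condLaw μ X C c) ρ
      simpa [ae_iff, not_lt, top_le_iff] using h
    have hsub : {p : 𝓧 × (Fin N → Fin M) | ¬ GN p ≠ ∞} ⊆ Ebad ×ˢ Set.univ := by
      rintro ⟨x, cs⟩ hp
      simp only [Set.mem_setOf_eq, not_not] at hp
      exact ⟨Set.mem_iUnion.mpr ⟨cs i, hp⟩, trivial⟩
    rw [ae_iff]
    refine measure_mono_null hsub ?_
    rw [hQdef, Qmeas, Measure.prod_prod, hEnull, zero_mul]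
  have hfinP : ∀ᵐ p ∂P, GN p ≠ ∞ := hfinQ.filter_mono hPQ.ae_le
  have hposP : ∀ᵐ p ∂P, GN p ≠ 0 := by
    rw [ae_iff]
    have hset : MeasurableSet {p : 𝓧 × (Fin N → Fin M) | GN p = 0} :=
      hGN (measurableSet_singleton 0)
    have heq : {p : 𝓧 × (Fin N → Fin M) | ¬ GN p ≠ 0} = {p | GN p = 0} := by
      ext p; simp
    rw [heq, hPd, withDensity_apply _ hset,
      setLIntegral_congr_fun hset (fun p hp => hp), lintegral_zero]
  -- the functions
  set f : 𝓧 × (Fin N → Fin M) → ℝ :=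
    fun p => ψ p.1 (p.2 i) - Real.log (a p.1 p.2) with hfdef
  set e : 𝓧 × (Fin N → Fin M) → ℝ :=
    fun p => Real.exp (ψ p.1 (p.2 i)) / a p.1 p.2 with hedef
  set r : 𝓧 × (Fin N → Fin M) → ℝ := fun p => e p / (GN p).toReal with hrdef
  have hemeas : Measurable e := (Real.measurable_exp.comp (hψ.comp hT)).div ha
  have hrmeas : Measurable r := hemeas.div hGN.ennreal_toReal
  have hepos : ∀ p, 0 < e p := fun p => div_pos (Real.exp_pos _) (hapos _ _)
  have hrnonneg : ∀ p, 0 ≤ r p := fun p => div_nonneg (hepos p).le ENNReal.toReal_nonneg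
  have hlint : ∫⁻ p, ENNReal.ofReal (r p) ∂P ≤ ∫⁻ p, ENNReal.ofReal (e p) ∂Q := by
    rw [hPd, lintegral_withDensity_eq_lintegral_mul _ hGN hrmeas.ennreal_ofReal]
    refine lintegral_mono fun p => ?_
    simp only [Pi.mul_apply]
    rcases eq_or_ne (GN p) ∞ with htop | htop
    · simp [hrdef, htop]
    rcases eq_or_ne (GN p) 0 with h0 | h0
    · simp [h0]
    · have ht : 0 < (GN p).toReal := ENNReal.toReal_pos h0 htop
      have hre : (GN p).toReal * r p = e p := by
        rw [hrdef]; field_simp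
      calc GN p * ENNReal.ofReal (r p)
          = ENNReal.ofReal ((GN p).toReal) * ENNReal.ofReal (r p) := by
            rw [ENNReal.ofReal_toReal htop]
        _ = ENNReal.ofReal ((GN p).toReal * r p) :=
            (ENNReal.ofReal_mul ENNReal.toReal_nonneg).symm
        _ = ENNReal.ofReal (e p) := by rw [hre]
        _ ≤ ENNReal.ofReal (e p) := le_rfl
  have heQ : ∫⁻ p, ENNReal.ofReal (e p) ∂Q < ∞ := by
    refine lt_of_le_of_lt (lintegral_mono fun p => ?_) hintQ.hasFiniteIntegral
    rw [Real.enorm_eq_ofReal (hepos p).le]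
  have hintr : Integrable r P := by
    refine ⟨hrmeas.aestronglyMeasurable, ?_⟩
    refine lt_of_le_of_lt ?_ (lt_of_le_of_lt hlint heQ)
    exact le_of_eq (lintegral_congr fun p => by rw [Real.enorm_eq_ofReal (hrnonneg p)])
  have hrint_le : ∫ p, r p ∂P ≤ ∫ p, e p ∂Q := by
    rw [integral_eq_lintegral_of_nonneg_ae (ae_of_all _ hrnonneg) hrmeas.aestronglyMeasurable,
      integral_eq_lintegral_of_nonneg_ae (ae_of_all _ fun p => (hepos p).le)
        hemeas.aestronglyMeasurable]
    exact ENNReal.toReal_mono heQ.ne hlint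
  have haeineq : ∀ᵐ p ∂P, f p ≤ LT p + r p - 1 := by
    filter_upwards [hposP, hfinP] with p h0 htop
    have ht : 0 < (GN p).toReal := ENNReal.toReal_pos h0 htop
    have h1 : Real.log (e p / (GN p).toReal) ≤ e p / (GN p).toReal - 1 :=
      Real.log_le_sub_one_of_pos (div_pos (hepos p) ht)
    have h2 : Real.log (e p / (GN p).toReal)
        = Real.log (e p) - Real.log ((GN p).toReal) :=
      Real.log_div (hepos p).ne' ht.ne'
    have h3 : Real.log (e p) = f p := by
      rw [hedef, hfdef]
      simp only
      rw [Real.log_div (Real.exp_ne_zero _) (hapos _ _).ne', Real.log_exp]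
    have h4 : LT p = Real.log ((GN p).toReal) := rfl
    have h5 : r p = e p / (GN p).toReal := rfl
    have key : f p - Real.log ((GN p).toReal) ≤ e p / (GN p).toReal - 1 := by
      rw [← h3, ← h2]; exact h1
    rw [h4, h5]
    linarith [key]
  have hPuniv : P Set.univ = 1 := P_univ μ X C hX hC hpos N i
  haveI : IsProbabilityMeasure P := ⟨hPuniv⟩
  have hintsum : Integrable (fun p => LT p + r p) P := hintLT.add hintr
  have hmono : ∫ p, f p ∂P ≤ ∫ p, (LT p + r p - 1) ∂P :=
    integral_mono_ae hintP (hintsum.sub (integrable_const 1)) haeineq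
  rw [integral_sub hintsum (integrable_const 1), integral_add hintLT hintr,
    integral_const, probReal_univ] at hmono
  simp only [ENNReal.toReal_one, smul_eq_mul, one_mul] at hmono
  rw [hKeq, ← hLTint_eq]
  linarith
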